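/- Let n be a positive integer, let λ_1,…,λ_n be real numbers, and let τ and a be nonzero reals. If z = α + βi with β ≠ 0 is a complex root of the characteristic equation (z+λ_1)(z+λ_2)⋯(z+λ_n) + a·e^{−τz} = 0, then z is a simple root: the derivative of the function χ(z) = (z+λ_1)⋯(z+λ_n) + a·e^{−τz} does not vanish at z. -/

import Mathlib

open Complex

/-- Lemma 2: every complex (non-real) root of the characteristic equation
`(z+λ₁)⋯(z+λₙ) + a e^{-τz} = 0` (with real `λⱼ`, nonzero real `τ, a`) is simple:
the derivative of `χ(z) = (z+λ₁)⋯(z+λₙ) + a e^{-τz}` does not vanish there. -/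
theorem complex_root_simple
    (n : ℕ) (hn : 0 < n) (lam : Fin n → ℝ)
    (τ a : ℝ) (hτ : τ ≠ 0) (ha : a ≠ 0)
    (z : ℂ) (hz : z.im ≠ 0)
    (hroot : (∏ j, (z + (lam j : ℂ))) + (a : ℂ) * Complex.exp (-(τ : ℂ) * z) = 0) :
    deriv (fun w : ℂ =>
      (∏ j, (w + (lam j : ℂ))) + (a : ℂ) * Complex.exp (-(τ : ℂ) * w)) z ≠ 0 := by
  intro hder
  set P : ℂ := ∏ j, (z + (lam j : ℂ)) with hPdef
  have hexp_ne : (a : ℂ) * Complex.exp (-(τ : ℂ) * z) ≠ 0 :=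
    mul_ne_zero (by exact_mod_cast ha) (Complex.exp_ne_zero _)
  have hPne : P ≠ 0 := by
    intro h0
    rw [h0, zero_add] at hroot
    exact hexp_ne hroot
  have hfac : ∀ j : Fin n, z + (lam j : ℂ) ≠ 0 := fun j =>
    Finset.prod_ne_zero_iff.mp hPne j (Finset.mem_univ j)
  -- derivative computation
  have h1 : ∀ j ∈ (Finset.univ : Finset (Fin n)),
      HasDerivAt (fun w : ℂ => w + (lam j : ℂ)) 1 z := fun j _ => by
    simpa using (hasDerivAt_id z).add_const ((lam j : ℂ))
  have hprod := HasDerivAt.fun_finsetProd h1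
  have hexp : HasDerivAt (fun w : ℂ => (a : ℂ) * Complex.exp (-(τ : ℂ) * w))
      ((a : ℂ) * (Complex.exp (-(τ : ℂ) * z) * (-(τ : ℂ)))) z := by
    have : HasDerivAt (fun w : ℂ => Complex.exp (-(τ : ℂ) * w))
        (Complex.exp (-(τ : ℂ) * z) * (-(τ : ℂ))) z := by
      have h2 : HasDerivAt (fun w : ℂ => (-(τ : ℂ)) * w) (-(τ : ℂ)) z := by
        simpa using (hasDerivAt_id z).const_mul (-(τ : ℂ))
      exact (Complex.hasDerivAt_exp _).comp z h2
    exact this.const_mul ((a : ℂ))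
  have hχ := hprod.fun_add hexp
  have hdval := hχ.deriv
  rw [hder] at hdval
  -- so  ∑ j, ∏_{i≠j}(z+λᵢ) + a e^{-τz} (-τ) = 0
  have hsum : (∑ j : Fin n, (∏ i ∈ Finset.univ.erase j, (z + (lam i : ℂ)))) + τ * P = 0 := by
    have hae : (a : ℂ) * Complex.exp (-(τ : ℂ) * z) = -P := by
      linear_combination hroot
    simp only [smul_eq_mul, mul_one] at hdval
    linear_combination -hdval + (τ : ℂ) * hae
  -- divide by P
  have hdiv : (∑ j : Fin n, (z + (lam j : ℂ))⁻¹) = -(τ : ℂ) := by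
    have hQ : ∀ j : Fin n, (z + (lam j : ℂ))⁻¹ =
        (∏ i ∈ Finset.univ.erase j, (z + (lam i : ℂ))) / P := by
      intro j
      rw [eq_div_iff hPne, hPdef, ← Finset.mul_prod_erase _ _ (Finset.mem_univ j)]
      field_simp [hfac j]
    rw [Finset.sum_congr rfl (fun j _ => hQ j), ← Finset.sum_div]
    rw [div_eq_iff hPne]
    linear_combination hsum
  -- take imaginary parts
  have him := congrArg Complex.im hdiv
  rw [Complex.im_sum] at him
  have hterm : ∀ j : Fin n, ((z + (lam j : ℂ))⁻¹).im =
      -z.im / Complex.normSq (z + (lam j : ℂ)) := by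
    intro j
    rw [Complex.inv_im]
    congr 1
    simp
  rw [Finset.sum_congr rfl (fun j _ => hterm j)] at him
  simp only [Complex.neg_im, Complex.ofReal_im, neg_zero] at him
  have hpos : (0 : ℝ) < ∑ j : Fin n, (Complex.normSq (z + (lam j : ℂ)))⁻¹ := by
    apply Finset.sum_pos
    · intro j _
      exact inv_pos.mpr (Complex.normSq_pos.mpr (hfac j))
    · exact Finset.univ_nonempty_iff.mpr (Fin.pos_iff_nonempty.mp hn)
  have : (∑ j : Fin n, -z.im / Complex.normSq (z + (lam j : ℂ))) =
      -z.im * ∑ j : Fin n, (Complex.normSq (z + (lam j : ℂ)))⁻¹ := by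
    rw [Finset.mul_sum]
    exact Finset.sum_congr rfl fun j _ => by field_simp
  rw [this] at him
  have := mul_eq_zero.mp him
  rcases this with h | h
  · exact hz (neg_eq_zero.mp h)
  · exact (ne_of_gt hpos) h
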